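/- Let n ≥ 3, let S = (s_{ij}) be a positive definite real symmetric n×n matrix, and set W = S⁻¹. Let A be the symmetric n×n matrix that is zero outside the upper-left 2×2 block, whose upper-left 2×2 block equals diag(1/s₁₁, 1/s₂₂) − (1/(s₁₁s₂₂ − s₁₂²))·[[s₂₂, −s₁₂],[−s₁₂, s₁₁]], and define K̂ = W + A. Then K̂ is invertible, its inverse Σ̂ = K̂⁻¹ satisfies σ̂_{12} = 0, and the matrix K̂·S·K̂ − K̂ has all entries zero except possibly the (1,2) and (2,1) entries, i.e. K̂SK̂ − K̂ lies in the span of e₁e₂ᵀ + e₂e₁ᵀ. Hence Σ̂ is a solution of the maximum likelihood score equations for the model L = {Σ ∈ S^n : σ_{12} = 0}, given as a rational function of S. -/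

import Mathlib

open Matrix

private def emb (n : ℕ) (k : Fin 2) : Fin (n + 3) := ⟨k.val, by omega⟩

private def Umat (n : ℕ) : Matrix (Fin (n + 3)) (Fin 2) ℝ :=
  Matrix.of fun i k => if i = emb n k then 1 else 0

private lemma emb0 (n : ℕ) : emb n 0 = 0 := rfl
private lemma emb1 (n : ℕ) : emb n 1 = 1 := by apply Fin.ext; simp [emb]

private lemma U_mul {n : ℕ} {α : Type*} [Fintype α] (Y : Matrix (Fin 2) α ℝ) (i : Fin (n+3)) (j : α) :
    (Umat n * Y) i j =
      (if i = emb n 0 then 1 else 0) * Y 0 j + (if i = emb n 1 then 1 else 0) * Y 1 j := by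
  simp [Umat, Matrix.mul_apply, Fin.sum_univ_two]

private lemma mul_Ut {n : ℕ} {α : Type*} [Fintype α] (Y : Matrix α (Fin 2) ℝ) (i : α) (j : Fin (n+3)) :
    (Y * (Umat n)ᵀ) i j =
      Y i 0 * (if j = emb n 0 then 1 else 0) + Y i 1 * (if j = emb n 1 then 1 else 0) := by
  simp [Umat, Matrix.mul_apply, Fin.sum_univ_two, Matrix.transpose_apply]

private lemma Ut_mul {n : ℕ} {α : Type*} [Fintype α] (X : Matrix (Fin (n+3)) α ℝ) (k : Fin 2) (j : α) :
    ((Umat n)ᵀ * X) k j = X (emb n k) j := by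
  simp [Umat, Matrix.mul_apply, Matrix.transpose_apply, ite_mul]

private lemma mul_U {n : ℕ} {α : Type*} [Fintype α] (X : Matrix α (Fin (n+3)) ℝ) (i : α) (l : Fin 2) :
    (X * Umat n) i l = X i (emb n l) := by
  simp [Umat, Matrix.mul_apply, mul_ite]


/-- The correction matrix `A` from Example 6.3: zero outside the upper-left `2 × 2`
block, with upper-left block
`diag(1/s₁₁, 1/s₂₂) − (1/(s₁₁s₂₂ − s₁₂²)) [[s₂₂, −s₁₂], [−s₁₂, s₁₁]]`
(here the first two indices of `Fin (n+3)` play the role of `1, 2`). -/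
noncomputable def correctionMatrix (n : ℕ)
    (S : Matrix (Fin (n + 3)) (Fin (n + 3)) ℝ) :
    Matrix (Fin (n + 3)) (Fin (n + 3)) ℝ :=
  let d : ℝ := S 0 0 * S 1 1 - S 0 1 ^ 2
  Matrix.of fun i j =>
    if i = 0 ∧ j = 0 then 1 / S 0 0 - S 1 1 / d
    else if (i = 0 ∧ j = 1) ∨ (i = 1 ∧ j = 0) then S 0 1 / d
    else if i = 1 ∧ j = 1 then 1 / S 1 1 - S 0 0 / d
    else 0

private lemma correction_eq (n : ℕ) (S : Matrix (Fin (n + 3)) (Fin (n + 3)) ℝ) :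
    correctionMatrix n S =
      Umat n * !![1 / S 0 0 - S 1 1 / (S 0 0 * S 1 1 - S 0 1 ^ 2),
                  S 0 1 / (S 0 0 * S 1 1 - S 0 1 ^ 2);
                  S 0 1 / (S 0 0 * S 1 1 - S 0 1 ^ 2),
                  1 / S 1 1 - S 0 0 / (S 0 0 * S 1 1 - S 0 1 ^ 2)] * (Umat n)ᵀ := by
  ext i j
  rw [Matrix.mul_assoc, U_mul, mul_Ut, mul_Ut]
  have h01 : (0 : Fin (n+3)) ≠ 1 := by simp [Fin.ext_iff]
  by_cases hi0 : i = 0 <;> by_cases hi1 : i = 1 <;> by_cases hj0 : j = 0 <;> by_cases hj1 : j = 1 <;>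
    simp_all [correctionMatrix, emb0, emb1]

private lemma twozero (a b c : ℝ) (ha : a ≠ 0) (hb : b ≠ 0) (hd : a*b - c^2 ≠ 0) :
    (!![1/a - b/(a*b-c^2), c/(a*b-c^2); c/(a*b-c^2), 1/b - a/(a*b-c^2)] :
        Matrix (Fin 2) (Fin 2) ℝ)
      - (c/(a*b-c^2)^2) • !![-2*b*c, a*b + c^2; a*b + c^2, -2*a*c]
      - (c/(a*b-c^2)^2) • (!![1/a - b/(a*b-c^2), c/(a*b-c^2); c/(a*b-c^2), 1/b - a/(a*b-c^2)]
          * !![a, c; c, b] * !![-2*b*c, a*b + c^2; a*b + c^2, -2*a*c]) = 0 := by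
  rw [Matrix.mul_fin_two, Matrix.mul_fin_two, Matrix.smul_of, Matrix.smul_of]
  ext k l
  fin_cases k <;> fin_cases l <;>
    · simp
      field_simp [show b * a - c ^ 2 ≠ 0 by rwa [mul_comm]]
      ring

private lemma Cdiag (a b c : ℝ) (ha : a ≠ 0) (hb : b ≠ 0) (hd : a*b - c^2 ≠ 0) (k : Fin 2) :
    ((!![1/a - b/(a*b-c^2), c/(a*b-c^2); c/(a*b-c^2), 1/b - a/(a*b-c^2)] :
        Matrix (Fin 2) (Fin 2) ℝ)
      + !![1/a - b/(a*b-c^2), c/(a*b-c^2); c/(a*b-c^2), 1/b - a/(a*b-c^2)]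
          * !![a, c; c, b]
          * !![1/a - b/(a*b-c^2), c/(a*b-c^2); c/(a*b-c^2), 1/b - a/(a*b-c^2)]) k k = 0 := by
  rw [Matrix.mul_fin_two, Matrix.mul_fin_two]
  fin_cases k <;>
    · simp
      field_simp [show b * a - c ^ 2 ≠ 0 by rwa [mul_comm]]
      ring

/-- For `n ≥ 3`, positive definite data `S`, `W = S⁻¹`, and `K̂ = W + A` with `A` the
explicit correction matrix, the matrix `K̂` is invertible, its inverse `Σ̂ = K̂⁻¹`
satisfies `σ̂₁₂ = 0`, and `K̂SK̂ − K̂` vanishes in all entries except possibly the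
`(1,2)` and `(2,1)` entries, i.e. it lies in the span of `e₁e₂ᵀ + e₂e₁ᵀ`.  Hence `Σ̂`
solves the ML score equations for the model `L = {Σ : σ₁₂ = 0}`, as a rational function
of `S`. -/
theorem rational_MLE_one_zero_restriction
    (n : ℕ) (S : Matrix (Fin (n + 3)) (Fin (n + 3)) ℝ) (hS : S.PosDef) :
    IsUnit (S⁻¹ + correctionMatrix n S).det ∧
    (S⁻¹ + correctionMatrix n S)⁻¹ 0 1 = 0 ∧
    ∀ i j : Fin (n + 3), ¬((i = 0 ∧ j = 1) ∨ (i = 1 ∧ j = 0)) →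
      ((S⁻¹ + correctionMatrix n S) * S * (S⁻¹ + correctionMatrix n S)
        - (S⁻¹ + correctionMatrix n S)) i j = 0 := by
  classical
  have hsym : S 1 0 = S 0 1 := by simpa using hS.isHermitian.apply 0 1
  have ha : 0 < S 0 0 := by
    have h := hS.dotProduct_mulVec_pos (x := Pi.single 0 1) (by simp [Function.ne_iff])
    simpa [dotProduct, mulVec, Pi.single_apply, Finset.sum_ite_eq] using h
  have hb : 0 < S 1 1 := by
    have h := hS.dotProduct_mulVec_pos (x := Pi.single 1 1) (by simp [Function.ne_iff])
    simpa [dotProduct, mulVec, Pi.single_apply, Finset.sum_ite_eq] using h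
  have hd : 0 < S 0 0 * S 1 1 - S 0 1 ^ 2 := by
    set b := S 1 1; set c := S 0 1
    set x : Fin (n+3) → ℝ :=
      b • (Pi.single 0 1 : Fin (n+3) → ℝ) + (-c) • (Pi.single 1 1 : Fin (n+3) → ℝ) with hx
    have hx0 : x ≠ 0 := by
      intro h
      have := congrFun h 0
      simp [hx, Pi.single_apply, Fin.ext_iff] at this
      exact hb.ne' this
    have h := hS.dotProduct_mulVec_pos hx0
    have hq : star x ⬝ᵥ S *ᵥ x = b * (S 0 0 * b - c^2) := by
      simp only [hx, star_trivial, mulVec_add, mulVec_smul, dotProduct_add, dotProduct_smul,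
        add_dotProduct, smul_dotProduct, smul_eq_mul]
      simp [dotProduct, mulVec, Pi.single_apply, Finset.sum_ite_eq, mul_ite, ite_mul,
        Finset.mul_sum, hsym]
      ring
    rw [hq] at h
    nlinarith
  set a := S 0 0 with ha'
  set b := S 1 1 with hb'
  set c := S 0 1 with hc'
  set d : ℝ := a * b - c ^ 2 with hd'
  have ha0 : a ≠ 0 := ne_of_gt ha
  have hb0 : b ≠ 0 := ne_of_gt hb
  have hd0 : d ≠ 0 := ne_of_gt hd
  have hdet : IsUnit S.det := hS.det_pos.ne'.isUnit
  have hWS : S⁻¹ * S = 1 := Matrix.nonsing_inv_mul S hdet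
  have hSW : S * S⁻¹ = 1 := Matrix.mul_nonsing_inv S hdet
  set B : Matrix (Fin 2) (Fin 2) ℝ := !![1/a - b/d, c/d; c/d, 1/b - a/d] with hB
  set M : Matrix (Fin 2) (Fin 2) ℝ := !![-2*b*c, a*b + c^2; a*b + c^2, -2*a*c] with hM
  set t : ℝ := c / d^2 with ht
  set A := correctionMatrix n S with hAdef
  have hA : A = Umat n * B * (Umat n)ᵀ := correction_eq n S
  set M' := Umat n * M * (Umat n)ᵀ with hM'
  set Sig := S - t • (S * M' * S) with hSig
  have hS2 : (Umat n)ᵀ * S * Umat n = !![a, c; c, b] := by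
    ext k l
    rw [mul_U, Ut_mul]
    fin_cases k <;> fin_cases l <;> simp [emb0, emb1, hsym] <;> rfl
  have sandwich : ∀ X Y : Matrix (Fin 2) (Fin 2) ℝ,
      (Umat n * X * (Umat n)ᵀ) * S * (Umat n * Y * (Umat n)ᵀ)
        = Umat n * (X * !![a, c; c, b] * Y) * (Umat n)ᵀ := by
    intro X Y
    rw [← hS2]
    simp only [Matrix.mul_assoc]
  have hzero : B - t • M - t • (B * !![a, c; c, b] * M) = 0 := by
    rw [hB, hM, ht, hd']
    exact twozero a b c ha0 hb0 (by rw [← hd']; exact hd0)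
  have hinner : A - t • M' - t • (A * S * M') = 0 := by
    rw [hA, hM', sandwich]
    have := congrArg (fun X => Umat n * X * (Umat n)ᵀ) hzero
    simpa [Matrix.mul_sub, Matrix.sub_mul, Matrix.mul_smul, Matrix.smul_mul] using this
  have e1 : S⁻¹ * (S * M' * S) = M' * S := by
    simp only [← Matrix.mul_assoc]
    rw [hWS, Matrix.one_mul]
  have hKSig : (S⁻¹ + A) * Sig = 1 := by
    have c2 : (S⁻¹ + A) * S = 1 + A * S := by rw [Matrix.add_mul, hWS]
    have c4 : (S⁻¹ + A) * (S * M' * S) = M' * S + A * S * M' * S := by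
      rw [Matrix.add_mul, e1]
      simp only [← Matrix.mul_assoc]
    have expand : (S⁻¹ + A) * Sig = 1 + (A - t • M' - t • (A * S * M')) * S := by
      rw [hSig, Matrix.mul_sub, Matrix.mul_smul, c2, c4, Matrix.sub_mul, Matrix.sub_mul,
        Matrix.smul_mul, Matrix.smul_mul, Matrix.mul_assoc, ← Matrix.mul_assoc, smul_add]
      abel
    rw [expand, hinner, Matrix.zero_mul, add_zero]
  refine ⟨Matrix.isUnit_det_of_right_inverse hKSig, ?_, ?_⟩
  · have hKinv : (S⁻¹ + A)⁻¹ = Sig := Matrix.inv_eq_right_inv hKSig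
    rw [hKinv, hSig]
    have hSMS : (S * M' * S) 0 1 = d ^ 2 := by
      have hassoc : S * M' * S = (S * Umat n) * (M * ((Umat n)ᵀ * S)) := by
        simp only [hM', Matrix.mul_assoc]
      rw [hassoc, Matrix.mul_apply, Fin.sum_univ_two]
      rw [mul_U, mul_U, Matrix.mul_apply, Matrix.mul_apply, Fin.sum_univ_two, Fin.sum_univ_two,
        Ut_mul, Ut_mul]
      simp only [emb0, emb1, ← ha', ← hb', ← hc', hsym, hM]
      rw [hd']
      norm_num [Matrix.cons_val_zero, Matrix.cons_val_one, Matrix.head_cons]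
      ring
    simp only [Matrix.sub_apply, Matrix.smul_apply, hSMS, smul_eq_mul, ht]
    field_simp
    exact sub_eq_zero.mpr rfl
  · intro i j hij
    set C : Matrix (Fin 2) (Fin 2) ℝ := B + B * !![a, c; c, b] * B with hC
    have hASA : A + A * S * A = Umat n * C * (Umat n)ᵀ := by
      rw [hA, sandwich, hC, Matrix.mul_add, Matrix.add_mul]
    have hKSK : (S⁻¹ + A) * S * (S⁻¹ + A) - (S⁻¹ + A) = A + A * S * A := by
      have h1 : (S⁻¹ + A) * S = 1 + A * S := by
        rw [Matrix.add_mul, hWS]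
      have h2 : A * S * S⁻¹ = A := by rw [Matrix.mul_assoc, hSW, Matrix.mul_one]
      rw [h1, Matrix.add_mul, Matrix.one_mul, Matrix.mul_add, h2]
      abel
    have hC00 : C 0 0 = 0 := by
      rw [hC, hB, hd']
      exact Cdiag a b c ha0 hb0 (by rw [← hd']; exact hd0) 0
    have hC11 : C 1 1 = 0 := by
      rw [hC, hB, hd']
      exact Cdiag a b c ha0 hb0 (by rw [← hd']; exact hd0) 1
    have hfin : ((S⁻¹ + A) * S * (S⁻¹ + A) - (S⁻¹ + A)) i j = (Umat n * C * (Umat n)ᵀ) i j := by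
      rw [hKSK, hASA]
    rw [hfin, Matrix.mul_assoc, U_mul, mul_Ut, mul_Ut]
    push_neg at hij
    have h01 : (0 : Fin (n+3)) ≠ 1 := by simp [Fin.ext_iff]
    simp only [emb0, emb1]
    by_cases hi0 : i = 0 <;> by_cases hi1 : i = 1 <;> by_cases hj0 : j = 0 <;> by_cases hj1 : j = 1 <;>
      first
        | exact absurd hj1 (hij.1 hi0)
        | exact absurd hj0 (hij.2 hi1)
        | exact absurd (hi0.symm.trans hi1) h01
        | exact absurd (hj0.symm.trans hj1) h01
        | simp [hi0, hi1, hj0, hj1, hC00, hC11, h01]
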